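/- Let X and Y be Banach spaces and let (T_n) be a sequence of Fredholm continuous linear maps from X to Y converging in operator norm to a continuous linear map T. If T is semi-Fredholm (its kernel is finite-dimensional and its range is closed), then T is Fredholm; that is, the cokernel Y/range(T) is also finite-dimensional. -/

import Mathlib

/-!
STATEMENT 3: A semi-Fredholm limit (in operator norm) of Fredholm operators between Banach
spaces is Fredholm.
-/

variable {X Y : Type*} [NormedAddCommGroup X] [NormedSpace ℝ X] [CompleteSpace X]
  [NormedAddCommGroup Y] [NormedSpace ℝ Y] [CompleteSpace Y]

/-- A continuous linear map between Banach spaces is Fredholm if its kernel is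
finite-dimensional, its range is closed, and its cokernel is finite-dimensional. -/
def IsFredholm (T : X →L[ℝ] Y) : Prop :=
  FiniteDimensional ℝ (LinearMap.ker (T : X →ₗ[ℝ] Y)) ∧ IsClosed (LinearMap.range (T : X →ₗ[ℝ] Y) : Set Y) ∧
    FiniteDimensional ℝ (Y ⧸ LinearMap.range (T : X →ₗ[ℝ] Y))

section AuxLemmas

open Metric

/-- If every element of `Z` is at relative distance `≤ δ` from some finite-dimensional
subspace `W` (which may depend on `δ`), then `Z` is finite dimensional. -/
theorem aux_finiteDimensional_of_approx {E : Type*} [NormedAddCommGroup E] [NormedSpace ℝ E]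
    (Z : Submodule ℝ E)
    (h : ∀ δ : ℝ, 0 < δ → ∃ W : Submodule ℝ E, FiniteDimensional ℝ W ∧
      ∀ z ∈ Z, ∃ w ∈ W, ‖z - w‖ ≤ δ * ‖z‖) :
    FiniteDimensional ℝ Z := by
  by_contra hZ
  obtain ⟨R, f, hR1, hfle, hfsep⟩ := exists_seq_norm_le_one_le_norm_sub (𝕜 := ℝ) hZ
  have hRpos : (0:ℝ) < R := lt_trans one_pos hR1
  have hδpos : (0:ℝ) < 1 / (8 * R) := by positivity
  obtain ⟨W, hWfin, hW⟩ := h _ hδpos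
  have key : ∀ j : ℕ, ∃ w ∈ W, ‖(f j : E) - w‖ ≤ 1/8 := by
    intro j
    obtain ⟨w, hwW, hw⟩ := hW (f j : E) (f j).2
    refine ⟨w, hwW, hw.trans ?_⟩
    have h1 : ‖(f j : E)‖ ≤ R := hfle j
    have h2 : (0:ℝ) < 8 * R := by positivity
    calc 1 / (8*R) * ‖(f j : E)‖ ≤ 1 / (8*R) * R := by
          exact mul_le_mul_of_nonneg_left h1 (le_of_lt hδpos)
      _ ≤ 1/8 := by
          rw [div_mul_eq_mul_div, one_mul, div_le_div_iff₀ h2 (by norm_num)]; ring_nf; nlinarith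
  choose w hwW hwn using key
  have hwnorm : ∀ j, ‖w j‖ ≤ R + 1 := by
    intro j
    have h1 : ‖(f j : E)‖ ≤ R := hfle j
    have := hwn j
    nlinarith [norm_sub_norm_le (w j) ((f j : E)), norm_sub_rev ((f j : E)) (w j),
      norm_nonneg (w j - (f j:E))]
  haveI := hWfin
  haveI : ProperSpace W := FiniteDimensional.proper ℝ W
  set w' : ℕ → W := fun j => ⟨w j, hwW j⟩ with hw'
  have hmem : ∀ j, w' j ∈ closedBall (0 : W) (R + 1) := by
    intro j
    rw [mem_closedBall_zero_iff]
    exact hwnorm j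
  obtain ⟨a, -, g, hgmono, hga⟩ :=
    (isCompact_closedBall (0 : W) (R + 1)).tendsto_subseq hmem
  obtain ⟨N, hN⟩ := (Metric.tendsto_atTop.mp hga) (1/4) (by norm_num)
  have hij : g N ≠ g (N + 1) := by
    exact ne_of_lt (hgmono (Nat.lt_succ_self N))
  have hsep : (1:ℝ) ≤ ‖f (g N) - f (g (N+1))‖ := hfsep hij
  have hd1 := hN N le_rfl
  have hd2 := hN (N+1) (Nat.le_succ N)
  have hdist : ‖w (g N) - w (g (N+1))‖ < 1/2 := by
    have h5 : dist (w' (g N)) (w' (g (N+1))) < 1/2 := by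
      calc dist (w' (g N)) (w' (g (N+1))) ≤ dist (w' (g N)) a + dist a (w' (g (N+1))) :=
            dist_triangle _ _ _
        _ < 1/4 + 1/4 := by
            rw [dist_comm a]
            exact add_lt_add hd1 hd2
        _ = 1/2 := by norm_num
    rw [Subtype.dist_eq, dist_eq_norm] at h5
    exact h5
  have hZnorm : ‖f (g N) - f (g (N+1))‖ = ‖(f (g N) : E) - (f (g (N+1)) : E)‖ := rfl
  have e1 := hwn (g N)
  have e2 := hwn (g (N+1))
  have hexp : (f (g N) : E) - (f (g (N+1)) : E) =
      ((f (g N) : E) - w (g N)) + (w (g N) - w (g (N+1)))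
        + (w (g (N+1)) - (f (g (N+1)) : E)) := by abel
  have hb : ‖(f (g N) : E) - (f (g (N+1)) : E)‖ ≤
      ‖(f (g N) : E) - w (g N)‖ + ‖w (g N) - w (g (N+1))‖
        + ‖w (g (N+1)) - (f (g (N+1)) : E)‖ := by
    rw [hexp]; exact norm_add₃_le
  have e2' : ‖w (g (N+1)) - (f (g (N+1)) : E)‖ ≤ 1/8 := by
    rw [norm_sub_rev]; exact e2
  rw [hZnorm] at hsep
  linarith

/-- The annihilator of `M` in the topological dual. -/
noncomputable def auxAnn {E : Type*} [NormedAddCommGroup E] [NormedSpace ℝ E]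
    (M : Submodule ℝ E) : Submodule ℝ (E →L[ℝ] ℝ) where
  carrier := {φ | ∀ m ∈ M, φ m = 0}
  add_mem' := by
    intro a b ha hb m hm
    simp [ha m hm, hb m hm]
  zero_mem' := by intro m hm; simp
  smul_mem' := by
    intro c a ha m hm
    simp [ha m hm]

theorem mem_auxAnn {E : Type*} [NormedAddCommGroup E] [NormedSpace ℝ E]
    {M : Submodule ℝ E} {φ : E →L[ℝ] ℝ} : φ ∈ auxAnn M ↔ ∀ m ∈ M, φ m = 0 := Iff.rfl

/-- If the cokernel of a continuous linear map is finite dimensional, then its range has a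
finite-dimensional complement. -/
theorem aux_exists_compl (f : X →L[ℝ] Y) (h : FiniteDimensional ℝ (Y ⧸ LinearMap.range (f : X →ₗ[ℝ] Y))) :
    ∃ F : Submodule ℝ Y, FiniteDimensional ℝ F ∧ LinearMap.range (f : X →ₗ[ℝ] Y) ⊔ F = ⊤ := by
  set R := LinearMap.range (f : X →ₗ[ℝ] Y)
  haveI := h
  obtain ⟨s, hs⟩ : (⊤ : Submodule ℝ (Y ⧸ R)).FG := Module.finite_def.mp h
  have hsurj := Submodule.Quotient.mk_surjective R
  set g : (Y ⧸ R) → Y := Function.surjInv hsurj with hg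
  have hgsec : ∀ q : Y ⧸ R, Submodule.Quotient.mk (g q) = q :=
    fun q => Function.surjInv_eq hsurj q
  refine ⟨Submodule.span ℝ (g '' ↑s), ?_, ?_⟩
  · exact FiniteDimensional.span_of_finite ℝ (s.finite_toSet.image g)
  · rw [eq_top_iff]
    intro y _
    have hy : (Submodule.Quotient.mk y : Y ⧸ R) ∈ Submodule.span ℝ (↑s) := by
      rw [hs]; trivial
    have himg : (↑s : Set (Y ⧸ R)) = R.mkQ '' (g '' ↑s) := by
      rw [Set.image_image]
      ext q
      simp only [Set.mem_image]
      constructor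
      · intro hq; exact ⟨q, hq, hgsec q⟩
      · rintro ⟨q', hq', rfl⟩
        rw [show R.mkQ (g q') = Submodule.Quotient.mk (g q') from rfl, hgsec]
        exact hq'
    rw [himg, ← Submodule.map_span] at hy
    obtain ⟨z, hz, hzy⟩ := hy
    have hsub : y - z ∈ R := by
      rw [← Submodule.Quotient.eq R]
      exact hzy.symm ▸ rfl
    have hdecomp : y = (y - z) + z := by abel
    rw [hdecomp]
    exact Submodule.add_mem _ (Submodule.mem_sup_left hsub)
      (Submodule.mem_sup_right hz)

/-- The annihilator of a subspace of finite codimension is finite dimensional. -/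
theorem aux_ann_finiteDimensional {E : Type*} [NormedAddCommGroup E] [NormedSpace ℝ E]
    (M V : Submodule ℝ E) (hV : FiniteDimensional ℝ V) (hMV : M ⊔ V = ⊤) :
    FiniteDimensional ℝ (auxAnn M) := by
  haveI := hV
  let ρ : auxAnn M →ₗ[ℝ] Module.Dual ℝ V :=
    { toFun := fun w => (w.1 : E →ₗ[ℝ] ℝ).domRestrict V
      map_add' := by intro a b; ext v; rfl
      map_smul' := by intro c a; ext v; rfl }
  have hρ : Function.Injective ρ := by
    intro a b hab
    apply Subtype.ext
    apply ContinuousLinearMap.ext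
    intro y
    have hy : y ∈ M ⊔ V := by rw [hMV]; trivial
    obtain ⟨m, hm, v, hv, rfl⟩ := Submodule.mem_sup.mp hy
    have h1 : a.1 m = 0 := a.2 m hm
    have h2 : b.1 m = 0 := b.2 m hm
    have h3 : a.1 v = b.1 v := by
      have := congrArg (fun (φ : Module.Dual ℝ V) => φ ⟨v, hv⟩) hab
      simpa [ρ] using this
    simp [map_add, h1, h2, h3]
  exact FiniteDimensional.of_injective ρ hρ

/-- If the annihilator of a closed subspace is finite dimensional,
then the quotient is finite dimensional. -/
theorem aux_quotient_finiteDimensional {E : Type*} [NormedAddCommGroup E] [NormedSpace ℝ E]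
    (R : Submodule ℝ E) (hR : IsClosed (R : Set E))
    (hZ : FiniteDimensional ℝ (auxAnn R)) :
    FiniteDimensional ℝ (E ⧸ R) := by
  haveI : IsClosed (R : Set E) := hR
  set mkC : E →L[ℝ] (E ⧸ R) :=
    LinearMap.mkContinuous R.mkQ 1 (fun y => by
      simpa using Submodule.Quotient.norm_mk_le R y) with hmkC
  have hmkCsurj : Function.Surjective mkC := Submodule.Quotient.mk_surjective R
  let j : StrongDual ℝ (E ⧸ R) →ₗ[ℝ] auxAnn R :=
    { toFun := fun g => ⟨g.comp mkC, by
        intro m hm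
        have h0 : mkC m = 0 := by
          show R.mkQ m = 0
          simpa using (Submodule.Quotient.mk_eq_zero R).mpr hm
        simp [h0]⟩
      map_add' := by intro a b; apply Subtype.ext; ext y; simp
      map_smul' := by intro c a; apply Subtype.ext; ext y; simp }
  have hj : Function.Injective j := by
    intro a b hab
    ext q
    obtain ⟨y, rfl⟩ := hmkCsurj q
    have := congrArg (fun (z : auxAnn R) => (z : E →L[ℝ] ℝ) y) hab
    simpa [j] using this
  haveI := hZ
  haveI : FiniteDimensional ℝ (StrongDual ℝ (E ⧸ R)) :=
    FiniteDimensional.of_injective (V₂ := auxAnn R) j hj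
  haveI : FiniteDimensional ℝ (StrongDual ℝ (StrongDual ℝ (E ⧸ R))) := by
    have hcoe : Function.Injective
        (ContinuousLinearMap.coeLM ℝ :
          (StrongDual ℝ (E ⧸ R) →L[ℝ] ℝ) →ₗ[ℝ] (StrongDual ℝ (E ⧸ R) →ₗ[ℝ] ℝ)) :=
      ContinuousLinearMap.coe_injective
    exact FiniteDimensional.of_injective _ hcoe
  have ι := (NormedSpace.inclusionInDoubleDualLi ℝ (E := E ⧸ R))
  exact FiniteDimensional.of_injective ι.toLinearMap ι.injective

set_option maxHeartbeats 1000000 in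
/-- A semi-Fredholm operator is bounded below on a closed complement of its kernel. -/
theorem aux_semiFredholm_bound (T : X →L[ℝ] Y) (hker : FiniteDimensional ℝ (LinearMap.ker (T : X →ₗ[ℝ] Y)))
    (hrange : IsClosed (LinearMap.range (T : X →ₗ[ℝ] Y) : Set Y)) :
    ∃ (X₀ : Submodule ℝ X) (D : ℝ), IsClosed (X₀ : Set X) ∧ IsCompl (LinearMap.ker (T : X →ₗ[ℝ] Y)) X₀ ∧
      0 < D ∧ ∀ x ∈ X₀, ‖x‖ ≤ D * ‖T x‖ := by
  haveI := hker
  obtain ⟨X₀, hX₀c, hcompl⟩ :=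
    (Submodule.ClosedComplemented.of_finiteDimensional (LinearMap.ker (T : X →ₗ[ℝ] Y))).exists_isClosed_isCompl
  haveI : CompleteSpace X₀ := hX₀c.completeSpace_coe
  haveI : CompleteSpace (LinearMap.range (T : X →ₗ[ℝ] Y)) := hrange.completeSpace_coe
  set f₁ : X₀ →L[ℝ] LinearMap.range (T : X →ₗ[ℝ] Y) :=
    ((T.comp X₀.subtypeL).codRestrict (LinearMap.range (T : X →ₗ[ℝ] Y))
      (fun x => LinearMap.mem_range_self _ _)) with hf₁
  have hker₁ : LinearMap.ker (f₁ : X₀ →ₗ[ℝ] LinearMap.range (T : X →ₗ[ℝ] Y)) = ⊥ := by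
    rw [Submodule.eq_bot_iff]
    rintro ⟨x, hx⟩ hx0
    have hTx : T x = 0 := by
      have := congrArg (Subtype.val) (show f₁ ⟨x, hx⟩ = 0 from hx0)
      exact this
    have hxk : x ∈ LinearMap.ker (T : X →ₗ[ℝ] Y) ⊓ X₀ := ⟨hTx, hx⟩
    rw [hcompl.inf_eq_bot] at hxk
    exact Subtype.ext hxk
  have hrange₁ : LinearMap.range (f₁ : X₀ →ₗ[ℝ] LinearMap.range (T : X →ₗ[ℝ] Y)) = ⊤ := by
    rw [eq_top_iff]
    rintro ⟨y, hy⟩ _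
    obtain ⟨x, hx⟩ := hy
    have hxtop : x ∈ LinearMap.ker (T : X →ₗ[ℝ] Y) ⊔ X₀ := by rw [hcompl.sup_eq_top]; trivial
    obtain ⟨k, hk, x₀, hx₀, rfl⟩ := Submodule.mem_sup.mp hxtop
    refine ⟨⟨x₀, hx₀⟩, ?_⟩
    apply Subtype.ext
    have hk0 : T k = 0 := hk
    simp only [f₁, ContinuousLinearMap.coe_codRestrict_apply,
      ContinuousLinearMap.coe_comp', Function.comp_apply, Submodule.coe_subtypeL',
      Submodule.coe_subtype]
    rw [← hx]
    simp [map_add, hk0]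
    rfl
  set e := ContinuousLinearEquiv.ofBijective f₁ hker₁ hrange₁ with he
  set C := ‖(e.symm : LinearMap.range (T : X →ₗ[ℝ] Y) →L[ℝ] X₀)‖ with hC
  refine ⟨X₀, C + 1, hX₀c, hcompl, by positivity, ?_⟩
  intro x hx
  have hx1 : (⟨x, hx⟩ : X₀) = e.symm (e ⟨x, hx⟩) := (e.symm_apply_apply _).symm
  have hb : ‖e.symm (e ⟨x, hx⟩)‖ ≤ C * ‖e ⟨x, hx⟩‖ :=
    (e.symm : LinearMap.range (T : X →ₗ[ℝ] Y) →L[ℝ] X₀).le_opNorm _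
  have hne : ‖e (⟨x, hx⟩ : X₀)‖ = ‖T x‖ := by
    have h7 : e (⟨x, hx⟩ : X₀) = f₁ ⟨x, hx⟩ := rfl
    rw [h7]
    rfl
  calc ‖x‖ = ‖(⟨x, hx⟩ : X₀)‖ := rfl
    _ = ‖e.symm (e ⟨x, hx⟩)‖ := by rw [← hx1]
    _ ≤ C * ‖e ⟨x, hx⟩‖ := hb
    _ = C * ‖T x‖ := by rw [hne]
    _ ≤ (C + 1) * ‖T x‖ := by
        have := norm_nonneg (T x)
        nlinarith [norm_nonneg ((e.symm : LinearMap.range (T : X →ₗ[ℝ] Y) →L[ℝ] X₀))]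

end AuxLemmas

set_option maxHeartbeats 1000000 in
theorem isFredholm_of_semiFredholm_limit_of_fredholm
    (Tn : ℕ → (X →L[ℝ] Y)) (T : X →L[ℝ] Y)
    (hTn : ∀ n, IsFredholm (Tn n))
    (hlim : Filter.Tendsto Tn Filter.atTop (nhds T))
    (hker : FiniteDimensional ℝ (LinearMap.ker (T : X →ₗ[ℝ] Y)))
    (hrange : IsClosed (LinearMap.range (T : X →ₗ[ℝ] Y) : Set Y)) :
    FiniteDimensional ℝ (Y ⧸ LinearMap.range (T : X →ₗ[ℝ] Y)) := by
  obtain ⟨X₀, D, hX₀c, hcompl, hD, hbound⟩ := aux_semiFredholm_bound T hker hrange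
  apply aux_quotient_finiteDimensional _ hrange
  apply aux_finiteDimensional_of_approx
  intro δ hδ
  -- pick `n` with `‖Tn n - T‖` small enough
  have hmin : (0:ℝ) < min (1/(2*D)) (δ/(2*D)) := by positivity
  obtain ⟨n, hn⟩ := (Metric.tendsto_atTop.mp hlim) _ hmin
  have hdistn := hn n le_rfl
  set S : X →L[ℝ] Y := Tn n with hSdef
  have hεlt : ‖S - T‖ < min (1/(2*D)) (δ/(2*D)) := by
    rw [← dist_eq_norm]
    exact hdistn
  set ε : ℝ := ‖S - T‖ with hεdef
  have hε0 : 0 ≤ ε := norm_nonneg _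
  have hε1 : ε ≤ 1/(2*D) := le_of_lt (lt_of_lt_of_le hεlt (min_le_left _ _))
  have hε2 : ε ≤ δ/(2*D) := le_of_lt (lt_of_lt_of_le hεlt (min_le_right _ _))
  -- `S` is bounded below on `X₀`
  have hSbound : ∀ x ∈ X₀, ‖x‖ ≤ (2*D) * ‖S x‖ := by
    intro x hx
    have h1 := hbound x hx
    have h2 : ‖S x - T x‖ ≤ ε * ‖x‖ := by
      have h2' := (S - T).le_opNorm x
      simpa [ContinuousLinearMap.sub_apply] using h2'
    have h3 : ‖T x‖ ≤ ‖S x‖ + ε * ‖x‖ := by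
      have h3' : T x = S x - (S x - T x) := by abel
      calc ‖T x‖ = ‖S x - (S x - T x)‖ := by rw [← h3']
        _ ≤ ‖S x‖ + ‖S x - T x‖ := norm_sub_le _ _
        _ ≤ ‖S x‖ + ε * ‖x‖ := by linarith
    have hDe : D * ε ≤ 1/2 := by
      have h4 : D * ε ≤ D * (1/(2*D)) := mul_le_mul_of_nonneg_left hε1 (le_of_lt hD)
      have heq : D * (1/(2*D)) = 1/2 := by field_simp <;> ring
      linarith
    nlinarith [norm_nonneg x, norm_nonneg (S x)]
  -- the image of `X₀` under `S` has finite codimension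
  set M : Submodule ℝ Y := X₀.map (S : X →ₗ[ℝ] Y) with hM
  obtain ⟨F, hFfin, hFsup⟩ := aux_exists_compl S ((hTn n).2.2)
  have hrangeS : LinearMap.range (S : X →ₗ[ℝ] Y) = Submodule.map (S : X →ₗ[ℝ] Y) ⊤ := by
    rw [Submodule.map_top]
  set V : Submodule ℝ Y := (LinearMap.ker (T : X →ₗ[ℝ] Y)).map (S : X →ₗ[ℝ] Y) ⊔ F with hV
  have hsup : M ⊔ V = ⊤ := by
    rw [hV, ← sup_assoc, hM, ← Submodule.map_sup, sup_comm X₀ (LinearMap.ker (T : X →ₗ[ℝ] Y)),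
      hcompl.sup_eq_top, ← hrangeS, hFsup]
  haveI hkmfin : FiniteDimensional ℝ ((LinearMap.ker (T : X →ₗ[ℝ] Y)).map (S : X →ₗ[ℝ] Y)) := by
    haveI := hker
    exact Module.Finite.map _ _
  haveI hVfin : FiniteDimensional ℝ V := by
    haveI := hFfin
    exact Submodule.finiteDimensional_sup _ _
  have hWfin := aux_ann_finiteDimensional M V hVfin hsup
  refine ⟨auxAnn M, hWfin, ?_⟩
  intro z hz
  have hzT : ∀ x : X, z (T x) = 0 := fun x => hz (T x) (LinearMap.mem_range_self _ x)
  -- restriction of `z` to `M` is small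
  set g : M →L[ℝ] ℝ := z.comp M.subtypeL with hg
  have hgn : ‖g‖ ≤ (2*D*ε) * ‖z‖ := by
    apply ContinuousLinearMap.opNorm_le_bound _ (by positivity)
    rintro ⟨m, hm⟩
    obtain ⟨x, hx, hxm⟩ := Submodule.mem_map.mp hm
    have hgm : g ⟨m, hm⟩ = z m := rfl
    have hnm : ‖(⟨m, hm⟩ : M)‖ = ‖m‖ := rfl
    have hSx : S x = m := hxm
    have hz1 : z m = z (S x - T x) := by
      rw [← hSx, map_sub, hzT x, sub_zero]
    have hz2 : ‖z (S x - T x)‖ ≤ ‖z‖ * (ε * ‖x‖) := by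
      calc ‖z (S x - T x)‖ ≤ ‖z‖ * ‖S x - T x‖ := z.le_opNorm _
        _ ≤ ‖z‖ * (ε * ‖x‖) := by
            apply mul_le_mul_of_nonneg_left _ (norm_nonneg z)
            have h2' := (S - T).le_opNorm x
            simpa [ContinuousLinearMap.sub_apply] using h2'
    have hz3 : ‖x‖ ≤ (2*D) * ‖S x‖ := hSbound x hx
    have hz4 : ‖z (S x - T x)‖ ≤ ‖z‖ * (ε * ((2*D) * ‖S x‖)) := by
      calc ‖z (S x - T x)‖ ≤ ‖z‖ * (ε * ‖x‖) := hz2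
        _ ≤ ‖z‖ * (ε * ((2*D) * ‖S x‖)) := by
            apply mul_le_mul_of_nonneg_left _ (norm_nonneg z)
            exact mul_le_mul_of_nonneg_left hz3 hε0
    rw [hgm, hnm, hz1, ← hSx]
    calc ‖z (S x - T x)‖ ≤ ‖z‖ * (ε * ((2*D) * ‖S x‖)) := hz4
      _ = (2*D*ε) * ‖z‖ * ‖S x‖ := by ring
  -- extend the restriction by Hahn-Banach
  obtain ⟨ψ, hψext, hψnorm⟩ := exists_extension_norm_eq M g
  refine ⟨z - ψ, ?_, ?_⟩
  · intro m hm
    have h8 : ψ m = g ⟨m, hm⟩ := hψext ⟨m, hm⟩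
    have h9 : g ⟨m, hm⟩ = z m := rfl
    simp [ContinuousLinearMap.sub_apply, h8, h9]
  · have h10 : z - (z - ψ) = ψ := by abel
    rw [h10, hψnorm]
    calc ‖g‖ ≤ (2*D*ε) * ‖z‖ := hgn
      _ ≤ δ * ‖z‖ := by
          apply mul_le_mul_of_nonneg_right _ (norm_nonneg z)
          have : 2*D*ε ≤ 2*D*(δ/(2*D)) := mul_le_mul_of_nonneg_left hε2 (by positivity)
          rwa [show 2*D*(δ/(2*D)) = δ by field_simp <;> ring] at this
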